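/- Strong maximum principle: let β ∈ (0,1) and u : T_m → ℝ satisfy -Δ_β u ≥ 0 in T_m and liminf u ≥ 0 along every branch. If u(z) = 0 for some z ∈ T_m, then u ≡ 0 on T_m. -/

import Mathlib

open Filter Finset Topology

/-- The weight `p_β`: `1` if `β = 0`, and `β/(1-β)` otherwise. -/
noncomputable def pB (β : ℝ) : ℝ := if β = 0 then 1 else β / (1 - β)

/-- Vertices of the regular `m`-branching tree are finite sequences over `Fin m`
(the root is `[]`, the successors of `x` are `i :: x`, the predecessor of `a :: t` is `t`,
and the level `|x|` is the list length).  The `β`-Laplacian on the tree. -/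
noncomputable def lapB (m : ℕ) (β : ℝ) (u : List (Fin m) → ℝ) : List (Fin m) → ℝ
  | [] => (∑ i : Fin m, u [i]) / m - u []
  | a :: t =>
      (β * u t + (1 - β) * (∑ i : Fin m, u (i :: a :: t)) / m - u (a :: t)) *
        pB β ^ (-((a :: t).length : ℤ))

/-- A branch: an infinite path starting at the root, following successors. -/
def IsBranch (m : ℕ) (b : ℕ → List (Fin m)) : Prop :=
  b 0 = [] ∧ ∀ n, ∃ i : Fin m, b (n + 1) = i :: b n

/-- Homogeneous Dirichlet boundary condition: `u → 0` along every branch. -/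
def ZeroOnBoundary (m : ℕ) (u : List (Fin m) → ℝ) : Prop :=
  ∀ b : ℕ → List (Fin m), IsBranch m b → Tendsto (fun n => u (b n)) atTop (𝓝 0)

/-- `lam` is a principal eigenvalue of `Δ_β`: it is positive and admits a bounded
nonnegative nontrivial eigenfunction vanishing on the boundary. -/
def IsPrincipalEigenvalue (m : ℕ) (β lam : ℝ) : Prop :=
  0 < lam ∧ ∃ u : List (Fin m) → ℝ,
    (∃ M, ∀ x, |u x| ≤ M) ∧ (∀ x, 0 ≤ u x) ∧ u ≠ 0 ∧
    (∀ x, -lapB m β u x = lam * u x) ∧ ZeroOnBoundary m u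

/-- Membership in the set `A_β`. -/
def memA (m : ℕ) (β lam : ℝ) : Prop :=
  0 < lam ∧ ∃ v : List (Fin m) → ℝ, ∃ c C : ℝ, 0 < c ∧
    (∀ x, c < v x ∧ v x < C) ∧ ∀ x, lapB m β v x + lam * v x ≤ 0

/-- `λ₁(β) = sup A_β`. -/
noncomputable def lam1 (m : ℕ) (β : ℝ) : ℝ := sSup {lam | memA m β lam}

theorem stmt3 (m : ℕ) (hm : 2 ≤ m) (β : ℝ) (hβ0 : 0 < β) (hβ1 : β < 1)
    (u : List (Fin m) → ℝ)
    (hsuper : ∀ x, 0 ≤ -lapB m β u x)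
    (hbdry : ∀ b : ℕ → List (Fin m), IsBranch m b →
      ∀ ε > (0 : ℝ), ∀ᶠ n in atTop, -ε ≤ u (b n))
    (z : List (Fin m)) (hz : u z = 0) :
    ∀ x, u x = 0 := by
  have hm0 : (0:ℝ) < m := by exact_mod_cast Nat.lt_of_lt_of_le two_pos hm
  have hp : 0 < pB β := by
    rw [pB, if_neg hβ0.ne']
    exact div_pos hβ0 (by linarith)
  have hroot : (∑ i : Fin m, u [i]) / m ≤ u [] := by
    have := hsuper []
    simp only [lapB] at this; linarith
  have hcons : ∀ (a : Fin m) (t : List (Fin m)),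
      β * u t + (1 - β) * ((∑ i : Fin m, u (i :: a :: t)) / m) ≤ u (a :: t) := by
    intro a t
    have h := hsuper (a :: t)
    have hP : 0 < pB β ^ (-(((a :: t).length : ℕ) : ℤ)) := zpow_pos hp _
    simp only [lapB] at h
    rw [mul_div_assoc] at h
    nlinarith [h, hP]
  -- a minimizing child
  have hmin : ∀ x : List (Fin m), ∃ i : Fin m, ∀ j : Fin m, u (i :: x) ≤ u (j :: x) := by
    intro x
    have hne : (univ : Finset (Fin m)).Nonempty :=
      ⟨⟨0, by omega⟩, mem_univ _⟩
    obtain ⟨i, _, hi⟩ := Finset.exists_min_image univ (fun j => u (j :: x)) hne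
    exact ⟨i, fun j => hi j (mem_univ j)⟩
  choose sel hsel using hmin
  -- min child is below average
  have havg : ∀ x : List (Fin m), u (sel x :: x) ≤ (∑ j : Fin m, u (j :: x)) / m := by
    intro x
    rw [le_div_iff₀ hm0]
    calc u (sel x :: x) * m = ∑ _j : Fin m, u (sel x :: x) := by
          simp [mul_comm]
      _ ≤ ∑ j : Fin m, u (j :: x) := Finset.sum_le_sum fun j _ => hsel x j
  -- descent step
  have hstep : ∀ x : List (Fin m), (∀ a t, x = a :: t → u x ≤ u t) →
      u (sel x :: x) ≤ u x := by
    intro x hx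
    match x with
    | [] => exact (havg []).trans hroot
    | a :: t =>
      have h1 := hcons a t
      have h2 := hx a t rfl
      have h3 := havg (a :: t)
      nlinarith [mul_nonneg hβ0.le (sub_nonneg.2 h2),
        mul_pos (show (0:ℝ) < 1 - β by linarith)
          (show (0:ℝ) < 1 by norm_num)]
  -- find a "local min along ancestors" vertex
  have hfind : ∀ x : List (Fin m), ∃ y, u y ≤ u x ∧ ∀ a t, y = a :: t → u y ≤ u t := by
    intro x
    induction x with
    | nil => exact ⟨[], le_refl _, by simp⟩
    | cons a t ih =>
      by_cases h : u (a :: t) ≤ u t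
      · refine ⟨a :: t, le_refl _, ?_⟩
        intro b s hbs
        injection hbs with h1 h2
        subst h2; exact h
      · obtain ⟨y, hy1, hy2⟩ := ih
        exact ⟨y, hy1.trans (by linarith), hy2⟩
  -- weak maximum principle
  have hnn : ∀ x, 0 ≤ u x := by
    intro x0
    by_contra hneg
    push_neg at hneg
    obtain ⟨y, hy1, hy2⟩ := hfind x0
    have hyneg : u y < 0 := lt_of_le_of_lt hy1 hneg
    -- descending path from y
    set g : ℕ → List (Fin m) := fun n => Nat.rec y (fun _ w => sel w :: w) n with hg
    have hg0 : g 0 = y := rfl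
    have hgs : ∀ n, g (n + 1) = sel (g n) :: g n := fun n => rfl
    have hdec : ∀ n, u (g (n + 1)) ≤ u (g n) ∧ ∀ a t, g n = a :: t → u (g n) ≤ u t := by
      intro n
      induction n with
      | zero => exact ⟨hstep y hy2, hy2⟩
      | succ k ih =>
        have hcond : ∀ a t, g (k + 1) = a :: t → u (g (k + 1)) ≤ u t := by
          intro a t hat
          rw [hgs k] at hat
          injection hat with h1 h2
          subst h2
          exact ih.1
        exact ⟨hstep (g (k + 1)) hcond, hcond⟩
    have hmono : ∀ n, u (g n) ≤ u y := by
      intro n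
      induction n with
      | zero => exact le_refl _
      | succ k ih => exact (hdec k).1.trans ih
    -- the branch: prefix from root to y, then g
    set L := y.length with hL
    set b : ℕ → List (Fin m) := fun n => if n ≤ L then y.drop (L - n) else g (n - L) with hb
    have hbL : ∀ n, L ≤ n → b n = g (n - L) := by
      intro n hn
      by_cases h : n ≤ L
      · have hnL : n = L := le_antisymm h hn
        rw [hnL, Nat.sub_self, hg0]
        simp [hb]
      · simp [hb, h]
    have hbranch : IsBranch m b := by
      constructor
      · simp [hb]; exact hL.ge
      · intro n
        by_cases h : n + 1 ≤ L
        · have hlt : L - (n + 1) < y.length := by omega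
          refine ⟨y.get ⟨L - (n + 1), hlt⟩, ?_⟩
          have h1 : b (n + 1) = y.drop (L - (n + 1)) := by simp [hb, h]
          have hn' : n ≤ L := by omega
          have h2 : b n = y.drop (L - n) := by simp [hb, hn']
          rw [h1, h2]
          have h3 : L - n = (L - (n + 1)) + 1 := by omega
          rw [h3]
          rw [List.drop_eq_getElem_cons hlt]
          simp
        · have h1 : b (n + 1) = g (n + 1 - L) := hbL (n + 1) (by omega)
          have h2 : b n = g (n - L) := hbL n (by omega)
          have h3 : n + 1 - L = (n - L) + 1 := by omega
          refine ⟨sel (g (n - L)), ?_⟩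
          rw [h1, h2, h3, hgs]
    have hev := hbdry b hbranch (-(u y) / 2) (by linarith)
    rw [eventually_atTop] at hev
    obtain ⟨N, hN⟩ := hev
    have h1 := hN (max N L) (le_max_left _ _)
    have h2 : u (b (max N L)) ≤ u y := by
      rw [hbL _ (le_max_right _ _)]
      exact hmono _
    linarith
  -- zero propagation
  have hchildzero : ∀ x, u x = 0 → ∀ i : Fin m, u (i :: x) = 0 := by
    intro x hx i
    match x with
    | [] =>
      have hS : ∑ j : Fin m, u [j] ≤ 0 := by
        rw [div_le_iff₀ hm0] at hroot
        rw [hx] at hroot; linarith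
      have := (Finset.sum_eq_zero_iff_of_nonneg
        (fun j _ => hnn [j])).1
        (le_antisymm hS (Finset.sum_nonneg fun j _ => hnn [j]))
      exact this i (mem_univ i)
    | a :: t =>
      have h1 := hcons a t
      rw [hx] at h1
      have ht : 0 ≤ β * u t := mul_nonneg hβ0.le (hnn t)
      have hS0 : 0 ≤ (∑ j : Fin m, u (j :: a :: t)) / m :=
        div_nonneg (Finset.sum_nonneg fun j _ => hnn _) hm0.le
      have hS : (∑ j : Fin m, u (j :: a :: t)) / m ≤ 0 := by
        nlinarith [h1, ht, hS0, show (0:ℝ) < 1 - β by linarith]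
      have hSe : ∑ j : Fin m, u (j :: a :: t) = 0 := by
        rw [div_le_iff₀ hm0] at hS
        have h2 : ∑ j : Fin m, u (j :: a :: t) ≤ 0 := by linarith
        exact le_antisymm h2 (Finset.sum_nonneg fun j _ => hnn _)
      exact (Finset.sum_eq_zero_iff_of_nonneg (fun j _ => hnn _)).1 hSe i (mem_univ i)
  have hparzero : ∀ (a : Fin m) t, u (a :: t) = 0 → u t = 0 := by
    intro a t hx
    have h1 := hcons a t
    rw [hx] at h1
    have ht : 0 ≤ β * u t := mul_nonneg hβ0.le (hnn t)
    have hS0 : 0 ≤ (∑ j : Fin m, u (j :: a :: t)) / m :=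
      div_nonneg (Finset.sum_nonneg fun j _ => hnn _) hm0.le
    have : β * u t = 0 := by nlinarith [h1, ht, hS0, show (0:ℝ) < 1 - β by linarith]
    have := mul_eq_zero.1 this
    rcases this with h | h
    · exact absurd h hβ0.ne'
    · exact h
  -- go up to the root
  have hup : ∀ x : List (Fin m), u x = 0 → u [] = 0 := by
    intro x
    induction x with
    | nil => exact fun h => h
    | cons a t ih => exact fun h => ih (hparzero a t h)
  have hroot0 : u [] = 0 := hup z hz
  intro x
  induction x with
  | nil => exact hroot0
  | cons a t ih => exact hchildzero t ih a
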